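/- arXiv:2508.02857 — 2 statements merged into one kernel-verified Lean document; each statement's English description precedes it below -/
import Mathlib

section
/- The cardinality of the set of values 𝕍(T) of a Qunity type T satisfies |𝕍(T)| ≤ 2^{size(T)}, with equality if and only if T contains no occurrence of Void and every sum subtype T₀ ⊕ T₁ of T satisfies size(T₀) = size(T₁). -/
/-- Qunity types. -/
inductive QType : Type
  | void : QType
  | unit : QType
  | sum : QType → QType → QType
  | prod : QType → QType → QType

/-- Number of qubits used to encode a value of the given type. -/
def QType.size : QType → ℕ
  | .void => 0
  | .unit => 0
  | .sum t0 t1 => 1 + max t0.size t1.size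
  | .prod t0 t1 => t0.size + t1.size

/-- The number of classical values `|𝕍(T)|` of a Qunity type. -/
def QType.card : QType → ℕ
  | .void => 0
  | .unit => 1
  | .sum t0 t1 => t0.card + t1.card
  | .prod t0 t1 => t0.card * t1.card

/-- `T` contains no occurrence of `Void`. -/
def QType.noVoid : QType → Prop
  | .void => False
  | .unit => True
  | .sum t0 t1 => t0.noVoid ∧ t1.noVoid
  | .prod t0 t1 => t0.noVoid ∧ t1.noVoid

/-- Every sum subtype `T₀ ⊕ T₁` of `T` satisfies `size T₀ = size T₁`. -/
def QType.balanced : QType → Prop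
  | .void => True
  | .unit => True
  | .sum t0 t1 => t0.size = t1.size ∧ t0.balanced ∧ t1.balanced
  | .prod t0 t1 => t0.balanced ∧ t1.balanced

/-- `|𝕍(T)| ≤ 2^{size T}`, with equality iff `T` contains no `Void` and every sum
subtype of `T` is size-balanced. -/
theorem card_le_two_pow_size (t : QType) :
    t.card ≤ 2 ^ t.size ∧ (t.card = 2 ^ t.size ↔ t.noVoid ∧ t.balanced) := by
  induction t with
  | void => simp [QType.card, QType.size, QType.noVoid]
  | unit => simp [QType.card, QType.size, QType.noVoid, QType.balanced]
  | sum t0 t1 ih0 ih1 =>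
    obtain ⟨h0, e0⟩ := ih0
    obtain ⟨h1, e1⟩ := ih1
    have hmax : 2 ^ (1 + max t0.size t1.size) = 2 ^ max t0.size t1.size + 2 ^ max t0.size t1.size := by
      rw [pow_add]; ring
    have l0 : 2 ^ t0.size ≤ 2 ^ max t0.size t1.size :=
      Nat.pow_le_pow_right (by norm_num) (le_max_left _ _)
    have l1 : 2 ^ t1.size ≤ 2 ^ max t0.size t1.size :=
      Nat.pow_le_pow_right (by norm_num) (le_max_right _ _)
    have hle : t0.card + t1.card ≤ 2 ^ (1 + max t0.size t1.size) := by
      rw [hmax]; exact Nat.add_le_add (h0.trans l0) (h1.trans l1)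
    refine ⟨hle, ?_, ?_⟩
    · intro heq
      simp only [QType.card, QType.size] at heq
      rw [hmax] at heq
      have e0' : t0.card = 2 ^ max t0.size t1.size := by omega
      have e1' : t1.card = 2 ^ max t0.size t1.size := by omega
      have m0 : 2 ^ t0.size = 2 ^ max t0.size t1.size := le_antisymm l0 (e0' ▸ h0)
      have m1 : 2 ^ t1.size = 2 ^ max t0.size t1.size := le_antisymm l1 (e1' ▸ h1)
      have s0 : t0.size = max t0.size t1.size := Nat.pow_right_injective (by norm_num) m0
      have s1 : t1.size = max t0.size t1.size := Nat.pow_right_injective (by norm_num) m1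
      have hb0 := e0.mp (by rw [e0', ← m0])
      have hb1 := e1.mp (by rw [e1', ← m1])
      exact ⟨⟨hb0.1, hb1.1⟩, by omega, hb0.2, hb1.2⟩
    · rintro ⟨⟨v0, v1⟩, hs, b0, b1⟩
      have c0 := e0.mpr ⟨v0, b0⟩
      have c1 := e1.mpr ⟨v1, b1⟩
      show t0.card + t1.card = 2 ^ (1 + max t0.size t1.size)
      rw [hmax, c0, c1, hs, max_self]
  | prod t0 t1 ih0 ih1 =>
    obtain ⟨h0, e0⟩ := ih0
    obtain ⟨h1, e1⟩ := ih1
    have hle : t0.card * t1.card ≤ 2 ^ (t0.size + t1.size) := by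
      rw [pow_add]; exact Nat.mul_le_mul h0 h1
    refine ⟨hle, ?_, ?_⟩
    · intro heq
      simp only [QType.card, QType.size] at heq
      rw [pow_add] at heq
      have p0 : 0 < 2 ^ t0.size := Nat.pow_pos (by norm_num)
      have p1 : 0 < 2 ^ t1.size := Nat.pow_pos (by norm_num)
      have c0 : t0.card = 2 ^ t0.size := by
        by_contra hne
        have : t0.card < 2 ^ t0.size := lt_of_le_of_ne h0 hne
        have : t0.card * t1.card < 2 ^ t0.size * 2 ^ t1.size := by
          calc t0.card * t1.card ≤ t0.card * 2 ^ t1.size := Nat.mul_le_mul_left _ h1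
          _ < 2 ^ t0.size * 2 ^ t1.size := (Nat.mul_lt_mul_right p1).mpr this
        omega
      have c1 : t1.card = 2 ^ t1.size := by
        rw [c0] at heq
        exact Nat.eq_of_mul_eq_mul_left p0 heq
      have hb0 := e0.mp c0
      have hb1 := e1.mp c1
      exact ⟨⟨hb0.1, hb1.1⟩, hb0.2, hb1.2⟩
    · rintro ⟨⟨v0, v1⟩, b0, b1⟩
      show t0.card * t1.card = 2 ^ (t0.size + t1.size)
      rw [e0.mpr ⟨v0, b0⟩, e1.mpr ⟨v1, b1⟩, pow_add]
end

section
/- Semantics of try/catch is trace non-increasing and respects the stated formula: let 𝓔₀ : L(H₀) → L(K) and 𝓔₁ : L(H₁) → L(K) be completely positive trace non-increasing superoperators. Define 𝓕 on product states by 𝓕(ρ₀ ⊗ ρ₁) = Tr(ρ₁)·𝓔₀(ρ₀) + (Tr(ρ₀) − Tr(𝓔₀(ρ₀)))·𝓔₁(ρ₁), extended linearly. Then 𝓕 is a completely positive trace non-increasing superoperator from L(H₀ ⊗ H₁) to L(K), and if 𝓔₀ (or 𝓔₁) is trace-preserving then so is 𝓕. -/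
open scoped ComplexOrder Kronecker

/-- The canonical block extension of a map on matrices: `(Φ ⊗ id_k)` applied to a
block matrix, applying `Φ` to each block. -/
def matExt {n m k : Type*} [Fintype n] [Fintype m] [Fintype k]
    (Φ : Matrix n n ℂ → Matrix m m ℂ) (ρ : Matrix (n × k) (n × k) ℂ) :
    Matrix (m × k) (m × k) ℂ :=
  Matrix.of fun p q => Φ (Matrix.of fun i j => ρ (i, p.2) (j, q.2)) p.1 q.1

/-- A map on matrices is completely positive if all of its block extensions preserve
positive semidefiniteness. -/
def IsCompletelyPositive {n m : Type*} [Fintype n] [Fintype m]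
    (Φ : Matrix n n ℂ → Matrix m m ℂ) : Prop :=
  ∀ (k : Type) [Fintype k] [DecidableEq k],
    ∀ ρ : Matrix (n × k) (n × k) ℂ, ρ.PosSemidef → (matExt Φ ρ).PosSemidef

/-- Partial trace over the second factor. -/
noncomputable def ptrSecond {n k : Type*} [Fintype n] [Fintype k]
    (ρ : Matrix (n × k) (n × k) ℂ) : Matrix n n ℂ :=
  Matrix.of fun i j => ∑ a : k, ρ (i, a) (j, a)

/-- Partial trace over the first factor. -/
noncomputable def ptrFirst {n k : Type*} [Fintype n] [Fintype k]
    (ρ : Matrix (n × k) (n × k) ℂ) : Matrix k k ℂ :=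
  Matrix.of fun a b => ∑ i : n, ρ (i, a) (i, b)

/-- The linear extension of the try/catch semantics
`𝓕(ρ₀ ⊗ ρ₁) = Tr(ρ₁)·𝓔₀(ρ₀) + (Tr(ρ₀) − Tr(𝓔₀(ρ₀)))·𝓔₁(ρ₁)`. -/
noncomputable def tryCatch {dH0 dH1 dK : Type*} [Fintype dH0] [Fintype dH1] [Fintype dK]
    (𝓔₀ : Matrix dH0 dH0 ℂ → Matrix dK dK ℂ)
    (𝓔₁ : Matrix dH1 dH1 ℂ → Matrix dK dK ℂ)
    (ρ : Matrix (dH0 × dH1) (dH0 × dH1) ℂ) : Matrix dK dK ℂ :=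
  𝓔₀ (ptrSecond ρ) + 𝓔₁ (ptrFirst ρ) - 𝓔₁ (ptrFirst (matExt 𝓔₀ ρ))

lemma tryCatch_eq {dH0 dH1 dK : Type*} [Fintype dH0] [Fintype dH1] [Fintype dK]
    (𝓔₀ : Matrix dH0 dH0 ℂ → Matrix dK dK ℂ)
    (𝓔₁ : Matrix dH1 dH1 ℂ → Matrix dK dK ℂ)
    (ρ : Matrix (dH0 × dH1) (dH0 × dH1) ℂ) :
    tryCatch 𝓔₀ 𝓔₁ ρ = 𝓔₀ (ptrSecond ρ) + 𝓔₁ (ptrFirst ρ) - 𝓔₁ (ptrFirst (matExt 𝓔₀ ρ)) :=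
  rfl

/-! ### Auxiliary lemmas -/

section Aux

open Matrix

variable {n m r : Type*} [Fintype n] [Fintype m] [Fintype r]

/-- The `(s,t)` block of a matrix on a product index. -/
def blkOf (ρ : Matrix (n × r) (n × r) ℂ) (s t : r) : Matrix n n ℂ :=
  Matrix.of fun i j => ρ (i, s) (j, t)

set_option linter.unusedSectionVars false in
lemma blkOf_apply (ρ : Matrix (n × r) (n × r) ℂ) (s t : r) (i j : n) :
    blkOf ρ s t i j = ρ (i, s) (j, t) := rfl

set_option linter.unusedSectionVars false in
lemma matExt_apply (Φ : Matrix n n ℂ → Matrix m m ℂ) (ρ : Matrix (n × r) (n × r) ℂ)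
    (p q : m × r) : matExt Φ ρ p q = Φ (blkOf ρ p.2 q.2) p.1 q.1 := rfl

lemma ptrFirst_apply (ρ : Matrix (n × r) (n × r) ℂ) (s t : r) :
    ptrFirst ρ s t = (blkOf ρ s t).trace := by
  simp [ptrFirst, blkOf, Matrix.trace, Matrix.diag]

lemma ptrSecond_eq_sum (ρ : Matrix (n × r) (n × r) ℂ) :
    ptrSecond ρ = ∑ a : r, blkOf ρ a a := by
  ext i j
  simp [ptrSecond, blkOf, Matrix.sum_apply]

lemma trace_ptrFirst (ρ : Matrix (n × r) (n × r) ℂ) : (ptrFirst ρ).trace = ρ.trace := by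
  simp only [Matrix.trace, Matrix.diag, ptrFirst, Matrix.of_apply]
  rw [Fintype.sum_prod_type, Finset.sum_comm]

lemma trace_ptrSecond (ρ : Matrix (n × r) (n × r) ℂ) : (ptrSecond ρ).trace = ρ.trace := by
  simp only [Matrix.trace, Matrix.diag, ptrSecond, Matrix.of_apply]
  rw [Fintype.sum_prod_type]

lemma posSemidef_ptrSecond {ρ : Matrix (n × r) (n × r) ℂ} (hρ : ρ.PosSemidef) :
    (ptrSecond ρ).PosSemidef := by
  have : ptrSecond ρ = ∑ a : r, ρ.submatrix (fun i => (i, a)) (fun i => (i, a)) := by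
    ext i j; simp [ptrSecond, Matrix.sum_apply]
  rw [this]
  exact Finset.sum_induction _ _ (fun a b ha hb => ha.add hb) .zero
    (fun a _ => hρ.submatrix _)

lemma posSemidef_ptrFirst {ρ : Matrix (n × r) (n × r) ℂ} (hρ : ρ.PosSemidef) :
    (ptrFirst ρ).PosSemidef := by
  have : ptrFirst ρ = ∑ i : n, ρ.submatrix (fun a => (i, a)) (fun a => (i, a)) := by
    ext a b; simp [ptrFirst, Matrix.sum_apply]
  rw [this]
  exact Finset.sum_induction _ _ (fun a b ha hb => ha.add hb) .zero
    (fun i _ => hρ.submatrix _)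

lemma isHermitian_ptrFirst {ρ : Matrix (n × r) (n × r) ℂ} (hρ : ρ.IsHermitian) :
    (ptrFirst ρ).IsHermitian := by
  unfold Matrix.IsHermitian
  ext s t
  simp only [Matrix.conjTranspose_apply, ptrFirst, Matrix.of_apply, star_sum]
  exact Finset.sum_congr rfl fun i _ => hρ.apply _ _

/-- Universe-polymorphic form of complete positivity. -/
lemma IsCompletelyPositive.matExt_posSemidef {Φ : Matrix n n ℂ → Matrix m m ℂ}
    (hcp : IsCompletelyPositive Φ) {r : Type*} [Fintype r]
    {ρ : Matrix (n × r) (n × r) ℂ} (hρ : ρ.PosSemidef) : (matExt Φ ρ).PosSemidef := by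
  classical
  let e := Fintype.equivFin r
  have h1 : (ρ.submatrix (Prod.map id e.symm) (Prod.map id e.symm)).PosSemidef :=
    hρ.submatrix _
  have h2 := hcp (Fin (Fintype.card r)) _ h1
  have h3 := h2.submatrix (Prod.map (id : m → m) e)
  have h4 : matExt Φ ρ =
      (matExt Φ (ρ.submatrix (Prod.map id e.symm) (Prod.map id e.symm))).submatrix
        (Prod.map id e) (Prod.map id e) := by
    ext ⟨u, s⟩ ⟨v, t⟩
    show Φ (blkOf ρ s t) u v = Φ (blkOf _ (e s) (e t)) u v
    congr 1
    ext i j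
    simp [blkOf, Matrix.submatrix_apply, Prod.map]
  rw [h4]; exact h3

/-- The quadratic form written as a double sum. -/
lemma quadform (M : Matrix r r ℂ) (x : r → ℂ) :
    star x ⬝ᵥ M *ᵥ x = ∑ s, ∑ t, star (x s) * M s t * x t := by
  simp [dotProduct, Matrix.mulVec, Finset.mul_sum, mul_assoc]

lemma ptrFirst_kron {p q : Type*} [Fintype p] [Fintype q]
    (A : Matrix p p ℂ) (B : Matrix q q ℂ) :
    ptrFirst (A ⊗ₖ B) = A.trace • B := by
  ext a b
  simp [ptrFirst, Matrix.trace, Matrix.diag, Finset.sum_mul]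

lemma ptrSecond_kron {p q : Type*} [Fintype p] [Fintype q]
    (A : Matrix p p ℂ) (B : Matrix q q ℂ) :
    ptrSecond (A ⊗ₖ B) = B.trace • A := by
  ext i j
  simp [ptrSecond, Matrix.trace, Matrix.diag, ← Finset.mul_sum, mul_comm]

end Aux

section Key

open Matrix

variable {dH0 dK : Type*} [Fintype dH0] [Fintype dK]

/-- Key lemma: for a CP trace-nonincreasing `𝓔₀`, the matrix
`ptrFirst ρ − ptrFirst ((𝓔₀ ⊗ id) ρ)` is PSD whenever `ρ` is. -/
lemma key_posSemidef (L : Matrix dH0 dH0 ℂ →ₗ[ℂ] Matrix dK dK ℂ)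
    (hcp : IsCompletelyPositive ⇑L)
    (htni : ∀ ρ : Matrix dH0 dH0 ℂ, ρ.PosSemidef → (L ρ).trace ≤ ρ.trace)
    {r : Type*} [Fintype r] (ρ : Matrix (dH0 × r) (dH0 × r) ℂ) (hρ : ρ.PosSemidef) :
    (ptrFirst ρ - ptrFirst (matExt ⇑L ρ)).PosSemidef := by
  classical
  have hM : (matExt ⇑L ρ).PosSemidef := hcp.matExt_posSemidef hρ
  refine Matrix.posSemidef_iff_dotProduct_mulVec.mpr ⟨?_, ?_⟩
  · exact (isHermitian_ptrFirst hρ.1).sub (isHermitian_ptrFirst hM.1)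
  · intro x
    set P : Matrix (dH0 × r) dH0 ℂ :=
      Matrix.of (fun p j => if p.1 = j then x p.2 else 0) with hP
    set C : Matrix dH0 dH0 ℂ := Pᴴ * ρ * P with hCdef
    have hCps : C.PosSemidef := hρ.conjTranspose_mul_mul_same P
    have hCentry : ∀ i j, C i j = ∑ a, ∑ b, star (x a) * ρ (i, a) (j, b) * x b := by
      intro i j
      rw [hCdef]
      simp only [Matrix.mul_apply, Matrix.conjTranspose_apply, hP, Matrix.of_apply,
        Fintype.sum_prod_type, apply_ite (star : ℂ → ℂ), star_zero, ite_mul, zero_mul,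
        mul_ite, mul_zero]
      rw [Finset.sum_comm]
      simp only [Finset.sum_ite_eq', Finset.mem_univ, if_true]
      have hinner : ∀ b : r,
          (∑ u : dH0, ∑ a : r, if u = i then star (x a) * ρ (u, a) (j, b) else 0)
          = ∑ a : r, star (x a) * ρ (i, a) (j, b) := by
        intro b
        rw [Finset.sum_comm]
        simp
      simp only [hinner, Finset.sum_mul]
      rw [Finset.sum_comm]
    have hCsum : C = ∑ a : r, ∑ b : r, (star (x a) * x b) • blkOf ρ a b := by
      ext i j
      simp only [Matrix.sum_apply, Matrix.smul_apply, smul_eq_mul, blkOf_apply, hCentry]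
      refine Finset.sum_congr rfl fun a _ => Finset.sum_congr rfl fun b _ => by ring
    have h1 : star x ⬝ᵥ (ptrFirst ρ) *ᵥ x = C.trace := by
      have htr : C.trace = ∑ a, ∑ b, ∑ i, star (x a) * ρ (i, a) (i, b) * x b := by
        simp only [Matrix.trace, Matrix.diag, hCentry]
        rw [Finset.sum_comm]
        exact Finset.sum_congr rfl fun a _ => Finset.sum_comm
      rw [quadform, htr]
      simp only [ptrFirst, Matrix.of_apply, Finset.mul_sum, Finset.sum_mul]
    have h2 : star x ⬝ᵥ (ptrFirst (matExt ⇑L ρ)) *ᵥ x = (L C).trace := by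
      rw [quadform, hCsum]
      rw [map_sum, Matrix.trace_sum]
      refine Finset.sum_congr rfl fun a _ => ?_
      rw [map_sum, Matrix.trace_sum]
      refine Finset.sum_congr rfl fun b _ => ?_
      rw [LinearMap.map_smul, Matrix.trace_smul]
      simp only [smul_eq_mul, ptrFirst, Matrix.of_apply, Matrix.trace, Matrix.diag,
        matExt_apply]
      ring
    have hle := htni C hCps
    rw [Matrix.sub_mulVec, dotProduct_sub, h1, h2]
    exact sub_nonneg.mpr hle

/-- Trace of the block extension equals the trace of `L` applied to the partial trace. -/
lemma trace_matExt (L : Matrix dH0 dH0 ℂ →ₗ[ℂ] Matrix dK dK ℂ)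
    {r : Type*} [Fintype r] (ρ : Matrix (dH0 × r) (dH0 × r) ℂ) :
    (matExt ⇑L ρ).trace = (L (ptrSecond ρ)).trace := by
  rw [ptrSecond_eq_sum, map_sum, Matrix.trace_sum]
  simp only [Matrix.trace, Matrix.diag, matExt_apply, Fintype.sum_prod_type]
  rw [Finset.sum_comm]

end Key

/-- The semantics of try/catch: `𝓕` agrees with the stated formula on product states,
is completely positive and trace non-increasing, and is trace-preserving whenever
`𝓔₀` (or `𝓔₁`) is. -/
theorem tryCatch_wellDefined {dH0 dH1 dK : Type*}
    [Fintype dH0] [Fintype dH1] [Fintype dK]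
    (𝓔₀ : Matrix dH0 dH0 ℂ → Matrix dK dK ℂ)
    (𝓔₁ : Matrix dH1 dH1 ℂ → Matrix dK dK ℂ)
    (hadd₀ : ∀ x y, 𝓔₀ (x + y) = 𝓔₀ x + 𝓔₀ y)
    (hsmul₀ : ∀ (c : ℂ) x, 𝓔₀ (c • x) = c • 𝓔₀ x)
    (hadd₁ : ∀ x y, 𝓔₁ (x + y) = 𝓔₁ x + 𝓔₁ y)
    (hsmul₁ : ∀ (c : ℂ) x, 𝓔₁ (c • x) = c • 𝓔₁ x)
    (hcp₀ : IsCompletelyPositive 𝓔₀) (hcp₁ : IsCompletelyPositive 𝓔₁)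
    (htni₀ : ∀ ρ, ρ.PosSemidef → (𝓔₀ ρ).trace ≤ ρ.trace)
    (htni₁ : ∀ ρ, ρ.PosSemidef → (𝓔₁ ρ).trace ≤ ρ.trace) :
    (∀ (ρ₀ : Matrix dH0 dH0 ℂ) (ρ₁ : Matrix dH1 dH1 ℂ),
      tryCatch 𝓔₀ 𝓔₁ (ρ₀ ⊗ₖ ρ₁)
        = ρ₁.trace • 𝓔₀ ρ₀ + (ρ₀.trace - (𝓔₀ ρ₀).trace) • 𝓔₁ ρ₁) ∧
    IsCompletelyPositive (tryCatch 𝓔₀ 𝓔₁) ∧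
    (∀ ρ : Matrix (dH0 × dH1) (dH0 × dH1) ℂ, ρ.PosSemidef →
      (tryCatch 𝓔₀ 𝓔₁ ρ).trace ≤ ρ.trace) ∧
    ((∀ ρ, (𝓔₀ ρ).trace = ρ.trace) →
      ∀ ρ, (tryCatch 𝓔₀ 𝓔₁ ρ).trace = ρ.trace) ∧
    ((∀ ρ, (𝓔₁ ρ).trace = ρ.trace) →
      ∀ ρ, (tryCatch 𝓔₀ 𝓔₁ ρ).trace = ρ.trace) := by
  classical
  set L₀ : Matrix dH0 dH0 ℂ →ₗ[ℂ] Matrix dK dK ℂ :=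
    { toFun := 𝓔₀, map_add' := hadd₀, map_smul' := hsmul₀ } with hL₀
  set L₁ : Matrix dH1 dH1 ℂ →ₗ[ℂ] Matrix dK dK ℂ :=
    { toFun := 𝓔₁, map_add' := hadd₁, map_smul' := hsmul₁ } with hL₁
  have hcoe₀ : 𝓔₀ = ⇑L₀ := rfl
  have hcoe₁ : 𝓔₁ = ⇑L₁ := rfl
  refine ⟨?_, ?_, ?_, ?_, ?_⟩
  · -- product formula
    intro ρ₀ ρ₁
    have e3 : matExt 𝓔₀ (ρ₀ ⊗ₖ ρ₁) = (𝓔₀ ρ₀) ⊗ₖ ρ₁ := by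
      ext ⟨u, a⟩ ⟨v, b⟩
      show 𝓔₀ (Matrix.of fun i j => (ρ₀ ⊗ₖ ρ₁) (i, a) (j, b)) u v = 𝓔₀ ρ₀ u v * ρ₁ a b
      have hb : (Matrix.of fun i j => (ρ₀ ⊗ₖ ρ₁) (i, a) (j, b)) = ρ₁ a b • ρ₀ := by
        ext i j
        simp [Matrix.kroneckerMap_apply, mul_comm]
      rw [hb, hsmul₀]
      simp [mul_comm]
    rw [tryCatch_eq, ptrSecond_kron, e3, ptrFirst_kron, ptrFirst_kron, hsmul₀, hsmul₁,
      hsmul₁, sub_smul]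
    abel
  · -- complete positivity
    intro k _ _ ρ hρ
    set M : Matrix ((dK × dH1) × k) ((dK × dH1) × k) ℂ := matExt (matExt 𝓔₀) ρ with hM
    set S : Matrix (dH0 × k) (dH0 × k) ℂ := matExt ptrSecond ρ with hS
    set X : Matrix (dH1 × k) (dH1 × k) ℂ :=
      matExt ptrFirst ρ - matExt ptrFirst M with hX
    have eq1 : matExt (tryCatch 𝓔₀ 𝓔₁) ρ = matExt 𝓔₀ S + matExt 𝓔₁ X := by
      ext ⟨u, s⟩ ⟨v, t⟩
      have hblkS : blkOf S s t = ptrSecond (blkOf ρ s t) := rfl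
      have hblkX : blkOf X s t
          = ptrFirst (blkOf ρ s t) - ptrFirst (matExt 𝓔₀ (blkOf ρ s t)) := by
        ext c d; rfl
      show tryCatch 𝓔₀ 𝓔₁ (blkOf ρ s t) u v
          = 𝓔₀ (blkOf S s t) u v + 𝓔₁ (blkOf X s t) u v
      rw [hblkS, hblkX, tryCatch_eq, hcoe₁, map_sub]
      simp [Matrix.sub_apply, Matrix.add_apply]
      ring
    -- S is PSD
    have hSps : S.PosSemidef := by
      have hsub : (ρ.submatrix
          (fun p : (dH0 × k) × dH1 => ((p.1.1, p.2), p.1.2))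
          (fun p : (dH0 × k) × dH1 => ((p.1.1, p.2), p.1.2))).PosSemidef :=
        hρ.submatrix _
      have : S = ptrSecond (ρ.submatrix
          (fun p : (dH0 × k) × dH1 => ((p.1.1, p.2), p.1.2))
          (fun p : (dH0 × k) × dH1 => ((p.1.1, p.2), p.1.2))) := by
        ext ⟨i, s⟩ ⟨j, t⟩; rfl
      rw [this]
      exact posSemidef_ptrSecond hsub
    -- X is PSD via the key lemma
    have hXps : X.PosSemidef := by
      have hsub : (ρ.submatrix
          (fun p : dH0 × (dH1 × k) => ((p.1, p.2.1), p.2.2))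
          (fun p : dH0 × (dH1 × k) => ((p.1, p.2.1), p.2.2))).PosSemidef :=
        hρ.submatrix _
      have hkey := key_posSemidef L₀ hcp₀ htni₀ _ hsub
      have hXeq : X = ptrFirst (ρ.submatrix
          (fun p : dH0 × (dH1 × k) => ((p.1, p.2.1), p.2.2))
          (fun p : dH0 × (dH1 × k) => ((p.1, p.2.1), p.2.2)))
          - ptrFirst (matExt ⇑L₀ (ρ.submatrix
          (fun p : dH0 × (dH1 × k) => ((p.1, p.2.1), p.2.2))
          (fun p : dH0 × (dH1 × k) => ((p.1, p.2.1), p.2.2)))) := by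
        ext ⟨c, s⟩ ⟨d, t⟩; rfl
      rw [hXeq]
      exact hkey
    rw [eq1]
    exact (hcp₀ k S hSps).add (hcp₁ k X hXps)
  · -- trace non-increasing
    intro ρ hρ
    have hA := key_posSemidef L₀ hcp₀ htni₀ ρ hρ
    have h𝓔₁A := htni₁ _ hA
    have hsub : 𝓔₁ (ptrFirst ρ - ptrFirst (matExt ⇑L₀ ρ))
        = 𝓔₁ (ptrFirst ρ) - 𝓔₁ (ptrFirst (matExt 𝓔₀ ρ)) := L₁.map_sub _ _
    have htr : (tryCatch 𝓔₀ 𝓔₁ ρ).trace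
        = (𝓔₀ (ptrSecond ρ)).trace + (𝓔₁ (ptrFirst ρ - ptrFirst (matExt ⇑L₀ ρ))).trace := by
      rw [tryCatch_eq, hsub, Matrix.trace_sub, Matrix.trace_sub, Matrix.trace_add]
      ring
    rw [htr]
    have hbound : (𝓔₁ (ptrFirst ρ - ptrFirst (matExt ⇑L₀ ρ))).trace
        ≤ ρ.trace - (𝓔₀ (ptrSecond ρ)).trace := by
      have : (ptrFirst ρ - ptrFirst (matExt ⇑L₀ ρ)).trace
          = ρ.trace - (𝓔₀ (ptrSecond ρ)).trace := by
        rw [Matrix.trace_sub, trace_ptrFirst, trace_ptrFirst, trace_matExt]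
        rfl
      calc (𝓔₁ (ptrFirst ρ - ptrFirst (matExt ⇑L₀ ρ))).trace
          ≤ (ptrFirst ρ - ptrFirst (matExt ⇑L₀ ρ)).trace := h𝓔₁A
        _ = ρ.trace - (𝓔₀ (ptrSecond ρ)).trace := this
    calc (𝓔₀ (ptrSecond ρ)).trace + (𝓔₁ (ptrFirst ρ - ptrFirst (matExt ⇑L₀ ρ))).trace
        ≤ (𝓔₀ (ptrSecond ρ)).trace + (ρ.trace - (𝓔₀ (ptrSecond ρ)).trace) :=
          add_le_add (le_refl _) hbound
      _ = ρ.trace := by ring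
  · -- 𝓔₀ trace preserving
    intro h ρ
    have hzero : ptrFirst (matExt 𝓔₀ ρ) = ptrFirst ρ := by
      ext c d
      rw [ptrFirst_apply, ptrFirst_apply]
      exact h (blkOf ρ c d)
    rw [tryCatch_eq, hzero, add_sub_cancel_right, h, trace_ptrSecond]
  · -- 𝓔₁ trace preserving
    intro h ρ
    rw [tryCatch_eq, Matrix.trace_sub, Matrix.trace_add, h, h, trace_ptrFirst, trace_ptrFirst,
      hcoe₀, trace_matExt]
    ring
end
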